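/- arXiv:1912.04365 — 12 statements merged into one kernel-verified Lean document; each statement's English description precedes it below -/
import Mathlib

section
/- Let E be a real inner product space with inner product ⟪·,·⟫ and norm ‖·‖, let H : E → E be a self-adjoint bounded linear operator, let g, s ∈ E, and let εH > 0 and μ ≥ 0 be real numbers. Suppose that g + H s + (εH + μ)·s = 0 and that ⟪v, H v⟫ + (εH + μ)·‖v‖² ≥ 0 for every v ∈ E. Then −⟪g, s⟫ − (1/2)·⟪s, H s⟫ ≥ (1/2)·εH·‖s‖². -/
open RealInnerProductSpace

/-- Lemma 2.1 of the paper: model reduction achieved by an exact solution of the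
regularized trust-region subproblem. -/
theorem exact_model_decrease {E : Type*} [NormedAddCommGroup E] [InnerProductSpace ℝ E]
    (H : E →L[ℝ] E) (hH : ∀ x y : E, ⟪H x, y⟫ = ⟪x, H y⟫)
    (g s : E) (εH μ : ℝ) (hεH : 0 < εH) (hμ : 0 ≤ μ)
    (hstat : g + H s + (εH + μ) • s = 0)
    (hpsd : ∀ v : E, ⟪v, H v⟫ + (εH + μ) * ‖v‖ ^ 2 ≥ 0) :
    -⟪g, s⟫ - (1 / 2) * ⟪s, H s⟫ ≥ (1 / 2) * εH * ‖s‖ ^ 2 := by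
  have h1 : ⟪g + H s + (εH + μ) • s, s⟫ = 0 := by rw [hstat]; simp
  rw [inner_add_left, inner_add_left, real_inner_smul_left, hH,
    real_inner_self_eq_norm_sq] at h1
  have h2 := hpsd s
  have h3 : μ * ‖s‖ ^ 2 ≥ 0 := by positivity
  nlinarith [h2, h3, h1]
end

section
/- Let E be a real inner product space with inner product ⟪·,·⟫ and norm ‖·‖, let H : E → E be a self-adjoint bounded linear operator, let g, s ∈ E, let η ∈ (0,1), εH > 0, L_H > 0 be real numbers, and let f_x, f_xs ∈ ℝ. Suppose that: (i) −⟪g,s⟫ − (1/2)·⟪s,Hs⟫ ≥ (1/2)·εH·‖s‖² (model reduction); (ii) f_xs − f_x ≤ ⟪g,s⟫ + (1/2)·⟪s,Hs⟫ + (L_H/6)·‖s‖³ (cubic Taylor upper bound); (iii) f_x − f_xs < η·(−⟪g,s⟫ − (1/2)·⟪s,Hs⟫) (the iteration is unsuccessful). Then ‖s‖ > 3(1−η)·εH/L_H. -/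
open RealInnerProductSpace

/-- Core implication of Lemma 2.2 of the paper: every unsuccessful trial step of the
exact trust-region Newton method is longer than `3(1-η)·εH/L_H`. -/
theorem unsuccessful_step_long {E : Type*} [NormedAddCommGroup E] [InnerProductSpace ℝ E]
    (H : E →L[ℝ] E) (hH : ∀ x y : E, ⟪H x, y⟫ = ⟪x, H y⟫)
    (g s : E) (η εH L_H : ℝ) (hη : η ∈ Set.Ioo (0 : ℝ) 1) (hεH : 0 < εH) (hL : 0 < L_H)
    (f_x f_xs : ℝ)
    (hmodel : -⟪g, s⟫ - (1 / 2) * ⟪s, H s⟫ ≥ (1 / 2) * εH * ‖s‖ ^ 2)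
    (htaylor : f_xs - f_x ≤ ⟪g, s⟫ + (1 / 2) * ⟪s, H s⟫ + (L_H / 6) * ‖s‖ ^ 3)
    (hunsucc : f_x - f_xs < η * (-⟪g, s⟫ - (1 / 2) * ⟪s, H s⟫)) :
    ‖s‖ > 3 * (1 - η) * εH / L_H := by
  obtain ⟨hη0, hη1⟩ := hη
  set δ : ℝ := -⟪g, s⟫ - (1 / 2) * ⟪s, H s⟫ with hδ
  clear_value δ
  have hd : f_x - f_xs ≥ δ - (L_H / 6) * ‖s‖ ^ 3 := by rw [hδ]; linarith
  have hkey : (1 - η) * δ < (L_H / 6) * ‖s‖ ^ 3 := by nlinarith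
  have hδ0 : 0 ≤ δ := le_trans (by positivity) hmodel
  have hs0 : 0 < ‖s‖ := by
    by_contra h
    have : ‖s‖ = 0 := le_antisymm (not_lt.mp h) (norm_nonneg s)
    rw [this] at hkey
    nlinarith [mul_nonneg (by linarith : (0:ℝ) ≤ 1 - η) hδ0]
  have h2 : (1 - η) * ((1 / 2) * εH * ‖s‖ ^ 2) < (L_H / 6) * ‖s‖ ^ 3 := by nlinarith
  rw [gt_iff_lt, div_lt_iff₀ hL]
  nlinarith [sq_nonneg (‖s‖)]
end

section
/- Let E be a real inner product space with inner product ⟪·,·⟫ and norm ‖·‖, let H : E → E be a self-adjoint bounded linear operator, let g, s, g⁺ ∈ E, let η ∈ (0,1), εH > 0, L_H > 0 be real numbers, and let f_x, f_xs ∈ ℝ. Suppose that: (i) g + H s + εH·s = 0; (ii) ⟪v, H v⟫ + εH·‖v‖² ≥ 0 for every v ∈ E; (iii) ‖g⁺ − g − H s‖ ≤ (L_H/2)·‖s‖²; (iv) f_x − f_xs ≥ η·(−⟪g,s⟫ − (1/2)·⟪s,Hs⟫). Then f_x − f_xs ≥ (η/(2(1+2L_H)))·min{ ‖g⁺‖²/εH,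 εH³ }. -/
open RealInnerProductSpace

lemma key_min_bound (t εH L_H G : ℝ) (ht : 0 ≤ t) (hε : 0 < εH) (hL : 0 < L_H)
    (hG : 0 ≤ G) (hGb : G ≤ (L_H / 2) * t ^ 2 + εH * t) :
    min (G ^ 2 / εH) (εH ^ 3) ≤ (1 + 2 * L_H) * (εH * t ^ 2) := by
  set c := Real.sqrt (1 + 2 * L_H) with hc
  have hc2 : c ^ 2 = 1 + 2 * L_H := Real.sq_sqrt (by nlinarith)
  have hc1 : 1 ≤ c := by nlinarith [Real.sqrt_nonneg (1 + 2 * L_H)]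
  have hc0 : (0:ℝ) < c := by linarith
  rcases le_or_gt (εH / c) t with h | h
  · refine le_trans (min_le_right _ _) ?_
    have hεc : εH ≤ c * t := by
      rw [div_le_iff₀ hc0] at h; linarith
    have h2 : εH ^ 2 ≤ c ^ 2 * t ^ 2 := by nlinarith
    calc εH ^ 3 = εH * εH ^ 2 := by ring
      _ ≤ εH * (c ^ 2 * t ^ 2) := by nlinarith
      _ = c ^ 2 * (εH * t ^ 2) := by ring
      _ = (1 + 2 * L_H) * (εH * t ^ 2) := by rw [hc2]
  · refine le_trans (min_le_left _ _) ?_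
    have htc : t ≤ εH / c := le_of_lt h
    -- 1 + L_H/(2c) ≤ c, i.e. 2c + L_H ≤ 2c² = 2 + 4L_H, i.e. 2c ≤ 2 + 3L_H
    have h2c : 2 * c ≤ 2 + 3 * L_H := by nlinarith
    have hGc : G ≤ t * εH * c := by
      have h3 : t * t ≤ t * (εH / c) := mul_le_mul_of_nonneg_left htc ht
      have hLt : (L_H / 2) * t ^ 2 ≤ (L_H / 2) * t * (εH / c) := by nlinarith
      have h4 : G ≤ (L_H / 2) * t * (εH / c) + εH * t := by linarith
      calc G ≤ (L_H / 2) * t * (εH / c) + εH * t := h4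
        _ = t * εH * (L_H / (2 * c) + 1) := by field_simp
        _ ≤ t * εH * c := by
            have h5 : L_H / (2 * c) + 1 ≤ c := by
              rw [div_add' _ _ _ (by positivity), div_le_iff₀ (by positivity)]
              nlinarith
            nlinarith [mul_nonneg ht hε.le]
    rw [div_le_iff₀ hε]
    nlinarith [mul_le_mul hGc hGc hG (by positivity : (0:ℝ) ≤ t * εH * c)]

/-- Lemma 2.3(ii) of the paper: objective decrease achieved by a successful interior step
of the exact trust-region Newton method. -/
theorem successful_interior_decrease {E : Type*} [NormedAddCommGroup E] [InnerProductSpace ℝ E]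
    (H : E →L[ℝ] E) (hH : ∀ x y : E, ⟪H x, y⟫ = ⟪x, H y⟫)
    (g s gp : E) (η εH L_H : ℝ) (hη : η ∈ Set.Ioo (0 : ℝ) 1) (hεH : 0 < εH) (hL : 0 < L_H)
    (f_x f_xs : ℝ)
    (hstat : g + H s + εH • s = 0)
    (hpsd : ∀ v : E, ⟪v, H v⟫ + εH * ‖v‖ ^ 2 ≥ 0)
    (hgrad : ‖gp - g - H s‖ ≤ (L_H / 2) * ‖s‖ ^ 2)
    (hsucc : f_x - f_xs ≥ η * (-⟪g, s⟫ - (1 / 2) * ⟪s, H s⟫)) :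
    f_x - f_xs ≥ (η / (2 * (1 + 2 * L_H))) * min (‖gp‖ ^ 2 / εH) (εH ^ 3) := by
  obtain ⟨hη0, hη1⟩ := hη
  set t := ‖s‖ with hts
  -- inner product identity from stationarity
  have h1 : ⟪g, s⟫ + ⟪s, H s⟫ + εH * t ^ 2 = 0 := by
    have := congrArg (fun v => ⟪v, s⟫) hstat
    simp only [inner_add_left, real_inner_smul_left, inner_zero_left] at this
    rw [hH s s] at this
    rw [real_inner_self_eq_norm_sq] at this
    linarith
  -- model decrease lower bound
  have hmodel : -⟪g, s⟫ - (1 / 2) * ⟪s, H s⟫ ≥ (εH / 2) * t ^ 2 := by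
    have := hpsd s
    nlinarith
  -- gradient bound
  have hgp : ‖gp‖ ≤ (L_H / 2) * t ^ 2 + εH * t := by
    have hgs : g + H s = -(εH • s) := by
      have := hstat
      rw [add_eq_zero_iff_eq_neg] at this
      exact this
    have : gp = (gp - g - H s) + (g + H s) := by abel
    calc ‖gp‖ = ‖(gp - g - H s) + (g + H s)‖ := by rw [← this]
      _ ≤ ‖gp - g - H s‖ + ‖g + H s‖ := norm_add_le _ _
      _ ≤ (L_H / 2) * t ^ 2 + εH * t := by
          rw [hgs, norm_neg, norm_smul, Real.norm_eq_abs, abs_of_pos hεH]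
          exact add_le_add hgrad le_rfl
  have hkey := key_min_bound t εH L_H ‖gp‖ (norm_nonneg s) hεH hL (norm_nonneg gp) hgp
  have hfx : f_x - f_xs ≥ η * ((εH / 2) * t ^ 2) := by nlinarith
  have hden : (0:ℝ) < 2 * (1 + 2 * L_H) := by linarith
  rw [ge_iff_le, div_mul_eq_mul_div, div_le_iff₀ hden]
  nlinarith
end

section
/- Let N ∈ ℕ, let εg > 0, εH > 0, c > 0, f_low ∈ ℝ, and let f : ℕ → ℝ and G : ℕ → ℝ be sequences. Suppose that: (i) f(i) − f(i+1) ≥ 0 for every i < N; (ii) f(N) ≥ f_low; (iii) for every i < N with G(i) ≤ εg, f(i) − f(i+1) ≥ c·min{εH, εH³}; (iv) for every i < N with G(i) > εg and G(i+1) > εg, f(i) − f(i+1) ≥ c·min{εH, εg²·εH⁻¹, εH³}. Then N ≤ (2(f(0) − f_low)/c)·max{εH⁻¹, εg⁻²·εH, εH⁻³} + 1. -/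
private lemma inv_min_eq_max (a b : ℝ) (ha : 0 < a) (hb : 0 < b) :
    (min a b)⁻¹ = max a⁻¹ b⁻¹ := by
  rcases le_total a b with h | h
  · rw [min_eq_left h, max_eq_left (by gcongr)]
  · rw [min_eq_right h, max_eq_right (by gcongr)]

/-- The counting argument of Lemmas 2.4 and 4.5 of the paper: a bound on the number of
successful iterations of a trust-region Newton method. -/
theorem successful_iteration_count (N : ℕ) (εg εH c f_low : ℝ)
    (f G : ℕ → ℝ) (hεg : 0 < εg) (hεH : 0 < εH) (hc : 0 < c)
    (hmono : ∀ i < N, f i - f (i + 1) ≥ 0)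
    (hlow : f N ≥ f_low)
    (hSL : ∀ i < N, G i ≤ εg → f i - f (i + 1) ≥ c * min εH (εH ^ 3))
    (hSGG : ∀ i < N, G i > εg → G (i + 1) > εg →
      f i - f (i + 1) ≥ c * min εH (min (εg ^ 2 * εH⁻¹) (εH ^ 3))) :
    (N : ℝ) ≤ (2 * (f 0 - f_low) / c) * max εH⁻¹ (max (εg⁻¹ ^ 2 * εH) (εH ^ 3)⁻¹) + 1 := by
  set m : ℝ := min εH (min (εg ^ 2 * εH⁻¹) (εH ^ 3)) with hm_def
  have hm : 0 < m := by
    apply lt_min hεH (lt_min _ (by positivity))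
    positivity
  -- the sets
  set SL : Finset ℕ := (Finset.range N).filter (fun i => G i ≤ εg) with hSL_def
  set SGG : Finset ℕ := (Finset.range N).filter (fun i => εg < G i ∧ εg < G (i + 1)) with hSGG_def
  set SGL : Finset ℕ := (Finset.range N).filter (fun i => εg < G i ∧ G (i + 1) ≤ εg) with hSGL_def
  have hdisj : Disjoint SL SGG := by
    rw [Finset.disjoint_left]
    intro i hi hi'
    simp only [hSL_def, hSGG_def, Finset.mem_filter] at hi hi'
    exact absurd hi.2 (not_le.mpr hi'.2.1)
  -- decrease on SL ∪ SGG
  have hkey : ∀ i ∈ SL ∪ SGG, c * m ≤ f i - f (i + 1) := by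
    intro i hi
    rcases Finset.mem_union.mp hi with hi | hi <;>
      simp only [hSL_def, hSGG_def, Finset.mem_filter, Finset.mem_range] at hi
    · refine le_trans ?_ (hSL i hi.1 hi.2)
      have : m ≤ min εH (εH ^ 3) := min_le_min le_rfl (min_le_right _ _)
      nlinarith
    · exact hSGG i hi.1 hi.2.1 hi.2.2
  -- sum bound
  have htel : ∑ i ∈ Finset.range N, (f i - f (i + 1)) = f 0 - f N :=
    Finset.sum_range_sub' f N
  have hsum : ((SL ∪ SGG).card : ℝ) * (c * m) ≤ f 0 - f_low := by
    have h1 : ((SL ∪ SGG).card : ℝ) * (c * m) ≤ ∑ i ∈ SL ∪ SGG, (f i - f (i + 1)) := by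
      have := Finset.card_nsmul_le_sum (SL ∪ SGG) (fun i => f i - f (i + 1)) (c * m) hkey
      simpa [nsmul_eq_mul] using this
    have h2 : ∑ i ∈ SL ∪ SGG, (f i - f (i + 1)) ≤ ∑ i ∈ Finset.range N, (f i - f (i + 1)) := by
      apply Finset.sum_le_sum_of_subset_of_nonneg
      · intro i hi
        rcases Finset.mem_union.mp hi with hi | hi <;>
          simp only [hSL_def, hSGG_def, Finset.mem_filter] at hi <;> exact hi.1
      · intro i hi _
        exact hmono i (Finset.mem_range.mp hi)
    linarith [htel, hlow, h1, h2]
  -- SGL card bound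
  have hGLcard : SGL.card ≤ SL.card + 1 := by
    have hsub : SGL ⊆ (SGL.filter (fun i => i + 1 < N)) ∪ {N - 1} := by
      intro i hi
      by_cases h : i + 1 < N
      · exact Finset.mem_union_left _ (Finset.mem_filter.mpr ⟨hi, h⟩)
      · have hiN : i < N := Finset.mem_range.mp (Finset.mem_filter.mp hi).1
        have : i = N - 1 := by omega
        exact Finset.mem_union_right _ (by simp [this])
    have hinj : (SGL.filter (fun i => i + 1 < N)).card ≤ SL.card := by
      apply Finset.card_le_card_of_injOn (fun i => i + 1)
      · intro i hi
        simp only [hSGL_def, Finset.mem_coe, Finset.mem_filter, Finset.mem_range] at hi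
        simp only [hSL_def, Finset.mem_coe, Finset.mem_filter, Finset.mem_range]
        exact ⟨hi.2, hi.1.2.2⟩
      · intro a _ b _ h
        simpa using h
    calc SGL.card ≤ ((SGL.filter (fun i => i + 1 < N)) ∪ {N - 1}).card :=
          Finset.card_le_card hsub
      _ ≤ (SGL.filter (fun i => i + 1 < N)).card + 1 := by
          apply le_trans (Finset.card_union_le _ _); simp
      _ ≤ SL.card + 1 := by omega
  -- partition
  have hpart : N ≤ SL.card + SGG.card + SGL.card := by
    have : Finset.range N ⊆ SL ∪ SGG ∪ SGL := by
      intro i hi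
      rcases le_or_gt (G i) εg with h | h
      · exact Finset.mem_union_left _ (Finset.mem_union_left _
          (Finset.mem_filter.mpr ⟨hi, h⟩))
      rcases le_or_gt (G (i + 1)) εg with h' | h'
      · exact Finset.mem_union_right _ (Finset.mem_filter.mpr ⟨hi, h, h'⟩)
      · exact Finset.mem_union_left _ (Finset.mem_union_right _
          (Finset.mem_filter.mpr ⟨hi, h, h'⟩))
    calc N = (Finset.range N).card := (Finset.card_range N).symm
      _ ≤ (SL ∪ SGG ∪ SGL).card := Finset.card_le_card this
      _ ≤ SL.card + SGG.card + SGL.card := by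
          apply le_trans (Finset.card_union_le _ _)
          have := Finset.card_union_le SL SGG
          omega
  have hKcard : (SL ∪ SGG).card = SL.card + SGG.card := Finset.card_union_of_disjoint hdisj
  have hN : (N : ℝ) ≤ 2 * ((SL ∪ SGG).card : ℝ) + 1 := by
    have : N ≤ 2 * (SL ∪ SGG).card + 1 := by omega
    exact_mod_cast this
  -- K ≤ (f0 - f_low) / (c * m)
  have hK : ((SL ∪ SGG).card : ℝ) ≤ (f 0 - f_low) / (c * m) := by
    rw [le_div_iff₀ (by positivity)]
    exact hsum
  have hmax : m⁻¹ = max εH⁻¹ (max (εg⁻¹ ^ 2 * εH) (εH ^ 3)⁻¹) := by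
    rw [hm_def, inv_min_eq_max _ _ hεH (lt_min (by positivity) (by positivity)),
      inv_min_eq_max _ _ (by positivity) (by positivity)]
    congr 1
    congr 1
    field_simp
  calc (N : ℝ) ≤ 2 * ((SL ∪ SGG).card : ℝ) + 1 := hN
    _ ≤ 2 * ((f 0 - f_low) / (c * m)) + 1 := by linarith
    _ = (2 * (f 0 - f_low) / c) * m⁻¹ + 1 := by
        field_simp
    _ = _ := by rw [hmax]
end

section
/- Let K ∈ ℕ, γ₁ ∈ (0,1), δ_max > 0, and T ∈ ℝ with 0 < T ≤ δ_max. Let δ : ℕ → ℝ be a sequence and let U ⊆ {0, 1, …, K−1}, with S = {0, 1, …, K−1} \ U. Suppose that: (i) δ(k) ≤ δ_max for every k ≤ K; (ii) for every k ∈ U, δ(k+1) ≤ γ₁·δ(k) and δ(k) > T. Then |U| ≤ ⌊1 + log(T/δ_max)/log(γ₁)⌋ · (|S| + 1), where log denotes the natural logarithm (so that log(T/δ_max)/log(γ₁) = log_{γ₁}(T/δ_max) ≥ 0). -/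
/-- The counting argument of Lemmas 2.5 and 4.6 of the paper: a bound on the number of
unsuccessful iterations of a trust-region method in terms of the number of successful ones. -/
theorem unsuccessful_iteration_count (K : ℕ) (γ₁ δ_max T : ℝ)
    (hγ₁ : γ₁ ∈ Set.Ioo (0 : ℝ) 1) (hδ_max : 0 < δ_max) (hT : 0 < T) (hTδ : T ≤ δ_max)
    (δ : ℕ → ℝ) (U : Finset ℕ) (hU : U ⊆ Finset.range K)
    (hbound : ∀ k ≤ K, δ k ≤ δ_max)
    (hunsucc : ∀ k ∈ U, δ (k + 1) ≤ γ₁ * δ k ∧ δ k > T) :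
    (U.card : ℝ) ≤
      (⌊1 + Real.log (T / δ_max) / Real.log γ₁⌋ : ℝ) *
        (((Finset.range K \ U).card : ℝ) + 1) := by
  classical
  obtain ⟨hγ0, hγ1⟩ := hγ₁
  set L : ℝ := Real.log (T / δ_max) / Real.log γ₁ with hLdef
  have hlogγ : Real.log γ₁ < 0 := Real.log_neg hγ0 hγ1
  have hLnn : 0 ≤ L := div_nonneg_iff.mpr (Or.inr
    ⟨Real.log_nonpos (by positivity) ((div_le_one hδ_max).mpr hTδ), hlogγ.le⟩)
  -- key analytic bound: a run of m consecutive unsuccessful iterations has (m : ℝ) < 1 + L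
  have key : ∀ (u m : ℕ), (∀ j, j < m → u + j ∈ U) → (m : ℝ) < 1 + L := by
    intro u m hm
    rcases Nat.eq_zero_or_pos m with h0 | h0
    · subst h0; push_cast; linarith
    · have hchain : ∀ j, j < m → δ (u + j) ≤ γ₁ ^ j * δ_max := by
        intro j hj
        induction j with
        | zero =>
          have huK : u < K := Finset.mem_range.mp (hU (hm 0 h0))
          simpa using hbound u huK.le
        | succ i ih =>
          have hi : i < m := lt_trans (Nat.lt_succ_self i) hj
          have hiU : u + i ∈ U := hm i hi
          have h1 := (hunsucc _ hiU).1
          have h2 := ih hi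
          calc δ (u + (i + 1)) = δ (u + i + 1) := by ring_nf
            _ ≤ γ₁ * δ (u + i) := h1
            _ ≤ γ₁ * (γ₁ ^ i * δ_max) := by nlinarith
            _ = γ₁ ^ (i + 1) * δ_max := by ring
      have hlast : T < γ₁ ^ (m - 1) * δ_max := by
        have h1 := (hunsucc _ (hm (m - 1) (Nat.sub_lt h0 one_pos))).2
        have h2 := hchain (m - 1) (Nat.sub_lt h0 one_pos)
        linarith
      have hdiv : T / δ_max < γ₁ ^ (m - 1) := (div_lt_iff₀ hδ_max).mpr hlast
      have hlog : Real.log (T / δ_max) < (m - 1 : ℕ) * Real.log γ₁ := by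
        have := Real.log_lt_log (by positivity) hdiv
        simpa [Real.log_pow] using this
      have hlt : ((m - 1 : ℕ) : ℝ) < L := by
        rw [hLdef, lt_div_iff_of_neg hlogγ]
        linarith
      have hcast : ((m - 1 : ℕ) : ℝ) = (m : ℝ) - 1 := by
        have : 1 ≤ m := h0
        push_cast [Nat.cast_sub this]
        ring
      rw [hcast] at hlt
      linarith
  -- the map f sending u to the first non-U index ≥ u
  have hex : ∀ u : ℕ, ∃ m, u + m ∉ U := by
    intro u
    refine ⟨K + 1, fun h => ?_⟩
    have := Finset.mem_range.mp (hU h)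
    omega
  set g : ℕ → ℕ := fun u => Nat.find (hex u) with hgdef
  set f : ℕ → ℕ := fun u => u + g u with hfdef
  have hgU : ∀ u, u + g u ∉ U := fun u => Nat.find_spec (hex u)
  have hglt : ∀ u j, j < g u → u + j ∈ U := fun u j hj =>
    not_not.mp (Nat.find_min (hex u) hj)
  set n : ℕ := (⌊1 + L⌋).toNat with hndef
  have hfloor1 : 1 ≤ ⌊1 + L⌋ := by
    rw [Int.le_floor]; push_cast; linarith
  have hncast : ((n : ℕ) : ℝ) = ((⌊1 + L⌋ : ℤ) : ℝ) := by
    rw [hndef]; exact_mod_cast Int.toNat_of_nonneg (le_trans one_pos.le hfloor1)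
  have hgle : ∀ u, g u ≤ n := by
    intro u
    have h1 : ((g u : ℕ) : ℝ) < 1 + L := key u (g u) (hglt u)
    have h2 : (g u : ℤ) ≤ ⌊1 + L⌋ := Int.le_floor.mpr (by exact_mod_cast h1.le)
    omega
  -- target set for f
  set t : Finset ℕ := insert K (Finset.range K \ U) with htdef
  have hmaps : ∀ u ∈ U, f u ∈ t := by
    intro u hu
    have huK : u < K := Finset.mem_range.mp (hU hu)
    have hgK : g u ≤ K - u := Nat.find_min' (hex u) (by
      have : u + (K - u) = K := by omega
      rw [this]
      exact fun h => by simpa using Finset.mem_range.mp (hU h))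
    have hfK : f u ≤ K := by simp only [hfdef]; omega
    rcases eq_or_lt_of_le hfK with h | h
    · rw [htdef]; simp [h]
    · rw [htdef]
      exact Finset.mem_insert_of_mem (Finset.mem_sdiff.mpr
        ⟨Finset.mem_range.mpr h, hgU u⟩)
  have hfiber : ∀ v ∈ t, (U.filter (fun u => f u = v)).card ≤ n := by
    intro v _
    have hsub : U.filter (fun u => f u = v) ⊆ Finset.Ico (v - n) v := by
      intro u hu
      obtain ⟨huU, hfu⟩ := Finset.mem_filter.mp hu
      have hg0 : 0 < g u := by
        rcases Nat.eq_zero_or_pos (g u) with h | h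
        · exact absurd (by simpa [h] using hgU u) (by simp [huU])
        · exact h
      have hfu' : u + g u = v := hfu
      have := hgle u
      simp only [Finset.mem_Ico]
      omega
    calc (U.filter (fun u => f u = v)).card ≤ (Finset.Ico (v - n) v).card :=
          Finset.card_le_card hsub
      _ = v - (v - n) := Nat.card_Ico _ _
      _ ≤ n := by omega
  have hmain : U.card ≤ n * t.card :=
    Finset.card_le_mul_card_image_of_maps_to hmaps n hfiber
  have htcard : t.card ≤ (Finset.range K \ U).card + 1 := Finset.card_insert_le _ _
  have hfinal : U.card ≤ n * ((Finset.range K \ U).card + 1) :=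
    le_trans hmain (Nat.mul_le_mul_left n htcard)
  calc (U.card : ℝ) ≤ (n : ℝ) * (((Finset.range K \ U).card : ℝ) + 1) := by
        exact_mod_cast hfinal
    _ = (⌊1 + L⌋ : ℝ) * (((Finset.range K \ U).card : ℝ) + 1) := by rw [hncast]
end

section
/- Let E be a real inner product space with inner product ⟪·,·⟫ and norm ‖·‖, let H : E → E be a self-adjoint bounded linear operator, let g, s ∈ E, let η ∈ (0,1), εH > 0, L_H > 0 be real numbers, and let f_x, f_xs ∈ ℝ. Suppose that: (i) −⟪g,s⟫ − (1/2)·⟪s,Hs⟫ ≥ (1/4)·εH·‖s‖²; (ii) f_xs − f_x ≤ ⟪g,s⟫ + (1/2)·⟪s,Hs⟫ + (L_H/6)·‖s‖³; (iii) f_x − f_xs < η·(−⟪g,s⟫ − (1/2)·⟪s,Hs⟫). Then ‖s‖ > 3(1−η)·εH/(2L_H). -/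
open RealInnerProductSpace

/-- Core implication of Lemma 4.3 of the paper: every unsuccessful trial step of the
inexact trust-region Newton-CG method is longer than `3(1-η)·εH/(2L_H)`. -/
theorem inexact_unsuccessful_step_long {E : Type*} [NormedAddCommGroup E]
    [InnerProductSpace ℝ E]
    (H : E →L[ℝ] E) (hH : ∀ x y : E, ⟪H x, y⟫ = ⟪x, H y⟫)
    (g s : E) (η εH L_H : ℝ) (hη : η ∈ Set.Ioo (0 : ℝ) 1) (hεH : 0 < εH) (hL : 0 < L_H)
    (f_x f_xs : ℝ)
    (hmodel : -⟪g, s⟫ - (1 / 2) * ⟪s, H s⟫ ≥ (1 / 4) * εH * ‖s‖ ^ 2)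
    (htaylor : f_xs - f_x ≤ ⟪g, s⟫ + (1 / 2) * ⟪s, H s⟫ + (L_H / 6) * ‖s‖ ^ 3)
    (hunsucc : f_x - f_xs < η * (-⟪g, s⟫ - (1 / 2) * ⟪s, H s⟫)) :
    ‖s‖ > 3 * (1 - η) * εH / (2 * L_H) := by
  obtain ⟨hη0, hη1⟩ := hη
  have hmnn : (0:ℝ) ≤ -⟪g, s⟫ - (1 / 2) * ⟪s, H s⟫ := le_trans (by positivity) hmodel
  have key : (1 - η) * (-⟪g, s⟫ - (1 / 2) * ⟪s, H s⟫) < L_H / 6 * ‖s‖ ^ 3 := by nlinarith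
  have hs0 : 0 < ‖s‖ := by
    by_contra h
    push_neg at h
    have h0 : ‖s‖ = 0 := le_antisymm h (norm_nonneg s)
    rw [h0] at key
    nlinarith [mul_nonneg (by linarith : (0:ℝ) ≤ 1 - η) hmnn]
  have h2 : (1 - η) * ((1/4) * εH * ‖s‖^2) < L_H / 6 * ‖s‖ ^ 3 := by
    calc (1 - η) * ((1/4) * εH * ‖s‖^2) ≤ (1 - η) * (-⟪g, s⟫ - (1 / 2) * ⟪s, H s⟫) :=
          mul_le_mul_of_nonneg_left hmodel (by linarith)
      _ < L_H / 6 * ‖s‖ ^ 3 := key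
  rw [gt_iff_lt, div_lt_iff₀ (by positivity)]
  nlinarith [mul_pos hs0 hs0, mul_pos (mul_pos hs0 hs0) hs0]
end

section
/- Let E be a real inner product space with inner product ⟪·,·⟫ and norm ‖·‖, let H : E → E be a self-adjoint bounded linear operator, let g, s, g⁺ ∈ E, let η ∈ (0,1), εH > 0, L_H > 0, ζ ∈ (0,1) be real numbers, and let f_x, f_xs ∈ ℝ. Suppose that: (i) ‖H s + 2εH·s + g‖ ≤ (ζ/2)·εH·‖s‖ (truncated-CG residual condition); (ii) ‖g⁺ − g − H s‖ ≤ (L_H/2)·‖s‖²; (iii) −⟪g,s⟫ − (1/2)·⟪s,Hs⟫ ≥ (1/4)·εH·‖s‖²; (iv) f_x − f_xs ≥ η·(−⟪g,s⟫ − (1/2)·⟪s,Hs⟫). Then f_x − f_xs ≥ (η/(4(7+2L_H)))·min{ ‖g⁺‖²/εH, εH³ }. -/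
open RealInnerProductSpace

private lemma aux_gp_sq_bound (L e u G : ℝ) (hL : 0 < L) (he : 0 < e) (hu : 0 ≤ u)
    (hG : 0 ≤ G) (hGb : G ≤ L / 2 * u ^ 2 + 5 / 2 * e * u)
    (h : (7 + 2 * L) * u ^ 2 ≤ e ^ 2) :
    G ^ 2 ≤ (7 + 2 * L) * e * u ^ 2 * e := by
  have hsq : G ^ 2 ≤ (L / 2 * u ^ 2 + 5 / 2 * e * u) ^ 2 := pow_le_pow_left₀ hG hGb 2
  nlinarith [sq_nonneg (5 * L * u ^ 2 - 3 * e * u),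
    mul_nonneg (mul_nonneg hL.le (sub_nonneg.2 h)) (sq_nonneg u),
    mul_nonneg (sub_nonneg.2 h) (sq_nonneg u),
    mul_nonneg hL.le (pow_nonneg hu 4), sq_nonneg (L * u ^ 2)]

/-- Lemma 4.4(ii) of the paper: objective decrease achieved by a successful interior step
of the inexact trust-region Newton-CG method. -/
theorem inexact_successful_interior_decrease {E : Type*} [NormedAddCommGroup E]
    [InnerProductSpace ℝ E]
    (H : E →L[ℝ] E) (hH : ∀ x y : E, ⟪H x, y⟫ = ⟪x, H y⟫)
    (g s gp : E) (η εH L_H ζ : ℝ) (hη : η ∈ Set.Ioo (0 : ℝ) 1) (hεH : 0 < εH)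
    (hL : 0 < L_H) (hζ : ζ ∈ Set.Ioo (0 : ℝ) 1)
    (f_x f_xs : ℝ)
    (hres : ‖H s + (2 * εH) • s + g‖ ≤ (ζ / 2) * εH * ‖s‖)
    (hgrad : ‖gp - g - H s‖ ≤ (L_H / 2) * ‖s‖ ^ 2)
    (hmodel : -⟪g, s⟫ - (1 / 2) * ⟪s, H s⟫ ≥ (1 / 4) * εH * ‖s‖ ^ 2)
    (hsucc : f_x - f_xs ≥ η * (-⟪g, s⟫ - (1 / 2) * ⟪s, H s⟫)) :
    f_x - f_xs ≥ (η / (4 * (7 + 2 * L_H))) * min (‖gp‖ ^ 2 / εH) (εH ^ 3) := by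
  obtain ⟨hη0, hη1⟩ := hη
  obtain ⟨hζ0, hζ1⟩ := hζ
  have hu : (0:ℝ) ≤ ‖s‖ := norm_nonneg s
  -- bound on ‖gp‖
  have hdecomp : gp = (gp - g - H s) + (H s + (2 * εH) • s + g) - (2 * εH) • s := by
    abel
  have hgp : ‖gp‖ ≤ L_H / 2 * ‖s‖ ^ 2 + 5 / 2 * εH * ‖s‖ := by
    have h1 : ‖gp‖ ≤ ‖gp - g - H s‖ + ‖H s + (2 * εH) • s + g‖ + ‖(2 * εH) • s‖ := by
      calc ‖gp‖ = ‖(gp - g - H s) + (H s + (2 * εH) • s + g) - (2 * εH) • s‖ := by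
            rw [← hdecomp]
        _ ≤ ‖(gp - g - H s) + (H s + (2 * εH) • s + g)‖ + ‖(2 * εH) • s‖ :=
            norm_sub_le _ _
        _ ≤ ‖gp - g - H s‖ + ‖H s + (2 * εH) • s + g‖ + ‖(2 * εH) • s‖ := by
            gcongr; exact norm_add_le _ _
    have h2 : ‖(2 * εH) • s‖ = 2 * εH * ‖s‖ := by
      rw [norm_smul, Real.norm_eq_abs, abs_of_pos (by linarith)]
    have h3 : ζ / 2 * εH * ‖s‖ ≤ 1 / 2 * εH * ‖s‖ := by
      have := mul_nonneg hεH.le hu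
      nlinarith
    nlinarith [h1, h2, h3, hgrad, hres]
  have hCpos : (0:ℝ) < 7 + 2 * L_H := by linarith
  -- key bound on the min
  have key : min (‖gp‖ ^ 2 / εH) (εH ^ 3) ≤ (7 + 2 * L_H) * εH * ‖s‖ ^ 2 := by
    rcases le_or_gt (εH ^ 2) ((7 + 2 * L_H) * ‖s‖ ^ 2) with h | h
    · refine (min_le_right _ _).trans ?_
      nlinarith
    · refine (min_le_left _ _).trans ?_
      rw [div_le_iff₀ hεH]
      exact aux_gp_sq_bound L_H εH ‖s‖ ‖gp‖ hL hεH hu (norm_nonneg gp) hgp h.le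
  -- decrease bound
  have hdec : f_x - f_xs ≥ η * (1 / 4 * εH * ‖s‖ ^ 2) := by
    have := mul_le_mul_of_nonneg_left hmodel hη0.le
    linarith
  have hfinal : η / (4 * (7 + 2 * L_H)) * min (‖gp‖ ^ 2 / εH) (εH ^ 3)
      ≤ η * (1 / 4 * εH * ‖s‖ ^ 2) := by
    have h1 : η / (4 * (7 + 2 * L_H)) * min (‖gp‖ ^ 2 / εH) (εH ^ 3)
        ≤ η / (4 * (7 + 2 * L_H)) * ((7 + 2 * L_H) * εH * ‖s‖ ^ 2) := by
      apply mul_le_mul_of_nonneg_left key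
      positivity
    have h2 : η / (4 * (7 + 2 * L_H)) * ((7 + 2 * L_H) * εH * ‖s‖ ^ 2)
        = η * (1 / 4 * εH * ‖s‖ ^ 2) := by
      field_simp
    linarith
  linarith
end

section
/- Let ξ ∈ [0,1), let P : ℕ → ℝ with P(k) ≥ 0 for all k, and let M : ℕ → ℕ. Suppose that: (i) M(0) ≤ 1; (ii) for every k, either M(k+1) = M(k) or M(k+1) = M(k) + 1; (iii) if M(0) = 0 then P(0) = 0, and if M(0) = 1 then P(0) ≤ ξ; (iv) for every k, if M(k+1) = M(k) then P(k+1) = 0; (v) for every k, if M(k+1) = M(k) + 1 then P(k+1) ≤ ξ·(1 − Σ_{i=0}^{k} P(i)). Then for every k, Σ_{i=0}^{k} P(i) ≤ 1 − (1−ξ)^{M(k)}. -/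
/-- The induction at the heart of the probabilistic guarantee of Theorem 4.7 of the paper:
the cumulative failure probability after `k` iterations is at most `1 - (1-ξ)^{M(k)}`,
where `M(k)` is the number of calls to the minimum eigenvalue oracle so far. -/
theorem meo_failure_probability_bound (ξ : ℝ) (hξ : ξ ∈ Set.Ico (0 : ℝ) 1)
    (P : ℕ → ℝ) (hP : ∀ k, 0 ≤ P k) (M : ℕ → ℕ)
    (hM0 : M 0 ≤ 1)
    (hMstep : ∀ k, M (k + 1) = M k ∨ M (k + 1) = M k + 1)
    (hP0 : (M 0 = 0 → P 0 = 0) ∧ (M 0 = 1 → P 0 ≤ ξ))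
    (hsame : ∀ k, M (k + 1) = M k → P (k + 1) = 0)
    (hcall : ∀ k, M (k + 1) = M k + 1 →
      P (k + 1) ≤ ξ * (1 - ∑ i ∈ Finset.range (k + 1), P i)) :
    ∀ k, ∑ i ∈ Finset.range (k + 1), P i ≤ 1 - (1 - ξ) ^ M k := by
  obtain ⟨hξ0, hξ1⟩ := hξ
  intro k
  induction k with
  | zero =>
    simp only [zero_add, Finset.sum_range_one]
    rcases Nat.le_one_iff_eq_zero_or_eq_one.mp hM0 with h | h <;> rw [h]
    · simp [hP0.1 h]
    · simpa using hP0.2 h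
  | succ k ih =>
    rw [Finset.sum_range_succ]
    rcases hMstep k with h | h
    · rw [h, hsame k h, add_zero]; exact ih
    · have hc := hcall k h
      rw [h, pow_succ]
      nlinarith [pow_nonneg (by linarith : (0:ℝ) ≤ 1 - ξ) (M k)]
end

section
/- For all real numbers a > 0, b > 0, and t ≥ 0, one has −a + √(a² + b·t) ≥ (−a + √(a² + b))·min{t, 1}. -/
/-- Inequality (2.12) of the paper (Lemma 17 of Royer and Wright, 2018):
`-a + √(a² + b·t) ≥ (-a + √(a² + b))·min{t, 1}` for `a, b > 0` and `t ≥ 0`. -/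
theorem sqrt_min_ineq (a b t : ℝ) (ha : 0 < a) (hb : 0 < b) (ht : 0 ≤ t) :
    -a + Real.sqrt (a ^ 2 + b * t) ≥ (-a + Real.sqrt (a ^ 2 + b)) * min t 1 := by
  set A := Real.sqrt (a ^ 2 + b * t) with hA
  set B := Real.sqrt (a ^ 2 + b) with hB
  have hAnn : 0 ≤ A := Real.sqrt_nonneg _
  have hBnn : 0 ≤ B := Real.sqrt_nonneg _
  have hA2 : A ^ 2 = a ^ 2 + b * t := Real.sq_sqrt (by positivity)
  have hB2 : B ^ 2 = a ^ 2 + b := Real.sq_sqrt (by positivity)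
  rcases le_total t 1 with h | h
  · rw [min_eq_left h]
    have hAB : A ≤ B := Real.sqrt_le_sqrt (by nlinarith)
    have key : ((-a + B) * t - (-a + A)) * ((A + a) * (B + a)) = b * t * (A - B) := by
      linear_combination (t * (A + a)) * hB2 - (B + a) * hA2
    nlinarith [key, mul_pos (by linarith : (0:ℝ) < A + a) (by linarith : (0:ℝ) < B + a),
      mul_nonneg (mul_nonneg ht hb.le) (sub_nonneg.mpr hAB)]
  · rw [min_eq_right h]
    have hAB : B ≤ A := Real.sqrt_le_sqrt (by nlinarith)
    linarith
end

section
/- Let L > 0, ε > 0, G ≥ 0, and t ≥ 0 be real numbers such that (L/2)·t² + ε·t − G ≥ 0. Then t ≥ (1/√(1+2L))·min{ G/ε, ε }. -/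
/-- Inequality from the proof of Lemma 2.3(ii) of the paper: if
`(L/2)·t² + ε·t - G ≥ 0` with `L, ε > 0`, `G, t ≥ 0`, then
`t ≥ (1/√(1+2L))·min{G/ε, ε}`. -/
theorem quadratic_step_lower_bound (L ε G t : ℝ) (hL : 0 < L) (hε : 0 < ε)
    (hG : 0 ≤ G) (ht : 0 ≤ t)
    (hq : (L / 2) * t ^ 2 + ε * t - G ≥ 0) :
    t ≥ (1 / Real.sqrt (1 + 2 * L)) * min (G / ε) ε := by
  set s := Real.sqrt (1 + 2 * L) with hs
  have hs2 : s ^ 2 = 1 + 2 * L := Real.sq_sqrt (by linarith)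
  have hs1 : 1 ≤ s := by nlinarith [Real.sqrt_nonneg (1 + 2 * L)]
  set m := min (G / ε) ε with hm
  have hm1 : m ≤ G / ε := min_le_left _ _
  have hm2 : m ≤ ε := min_le_right _ _
  have hm0 : 0 ≤ m := le_min (div_nonneg hG hε.le) hε.le
  have hmG : ε * m ≤ G := by
    have := (le_div_iff₀ hε).mp hm1
    linarith
  by_contra h
  push_neg at h
  have hspos : 0 < s := by linarith
  have hts : s * t < m := by
    rw [div_mul_eq_mul_div, lt_div_iff₀ hspos, mul_comm] at h
    linarith
  have hst2 : (s * t) ^ 2 < m ^ 2 := by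
    nlinarith [mul_nonneg hspos.le ht]
  have hkey : L / 2 + s ≤ s ^ 2 := by
    nlinarith [sq_nonneg (s - 1 - 3 * L / 2)]
  have e1 : ε * s * (s * t) < ε * s * m :=
    mul_lt_mul_of_pos_left hts (mul_pos hε hspos)
  have e2 : (L / 2) * (s * t) ^ 2 < (L / 2) * m ^ 2 :=
    mul_lt_mul_of_pos_left hst2 (by linarith)
  have e3 : m ^ 2 ≤ ε * m := by nlinarith
  have e4 : s ^ 2 * G ≤ (L / 2) * (s * t) ^ 2 + ε * s * (s * t) := by nlinarith
  have e5 : ε * m * (L / 2 + s) ≤ ε * m * s ^ 2 :=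
    mul_le_mul_of_nonneg_left hkey (by positivity)
  have e6 : ε * m * s ^ 2 ≤ G * s ^ 2 :=
    mul_le_mul_of_nonneg_right hmG (by positivity)
  nlinarith
end

section
/- Let L > 0, ε > 0, G ≥ 0, and t ≥ 0 be real numbers such that (L/2)·t² + (5/2)·ε·t − G ≥ 0. Then t ≥ (1/√(7+2L))·min{ G/ε, ε }. -/
/-- Inequality from the proof of Lemma 4.4(ii) of the paper: if
`(L/2)·t² + (5/2)·ε·t - G ≥ 0` with `L, ε > 0`, `G, t ≥ 0`, then
`t ≥ (1/√(7+2L))·min{G/ε, ε}`. -/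
theorem inexact_quadratic_step_lower_bound (L ε G t : ℝ) (hL : 0 < L) (hε : 0 < ε)
    (hG : 0 ≤ G) (ht : 0 ≤ t)
    (hq : (L / 2) * t ^ 2 + (5 / 2) * ε * t - G ≥ 0) :
    t ≥ (1 / Real.sqrt (7 + 2 * L)) * min (G / ε) ε := by
  by_contra hc
  push_neg at hc
  set S := Real.sqrt (7 + 2 * L) with hSdef
  have hS2 : S ^ 2 = 7 + 2 * L := Real.sq_sqrt (by linarith)
  have hSpos : 0 < S := Real.sqrt_pos.mpr (by linarith)
  set m := min (G / ε) ε with hmdef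
  have hm : 0 < m := by
    by_contra hm
    push_neg at hm
    have h0 : (1 / S) * m ≤ 0 :=
      mul_nonpos_of_nonneg_of_nonpos (by positivity) hm
    linarith
  have hGε : ε * m ≤ G := by
    have h1 : m ≤ G / ε := min_le_left _ _
    have : ε * m ≤ ε * (G / ε) := by nlinarith
    calc ε * m ≤ ε * (G / ε) := this
      _ = G := by field_simp
  have hmε : m ≤ ε := min_le_right _ _
  have htS : t * S < m := by
    have h1 := mul_lt_mul_of_pos_right hc hSpos
    have h2 : (1 / S) * m * S = m := by field_simp
    linarith
  have ht2 : t * S < ε := lt_of_lt_of_le htS hmε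
  have htpos : 0 < t := by
    rcases lt_or_eq_of_le ht with h | h
    · exact h
    · exfalso
      rw [← h] at hq
      have hG0 : G ≤ 0 := by nlinarith
      have hG0' : G = 0 := le_antisymm hG0 hG
      have : m ≤ 0 := by
        rw [hmdef, hG0']
        simp
      linarith
  have h5S : 5 * S ≤ 14 + 3 * L := by
    nlinarith [hS2, hSpos, sq_nonneg (3 * L + 14 - 5 * S), sq_nonneg L]
  -- main contradiction
  have key : ε * t * S < (L / 2) * t ^ 2 + (5 / 2) * ε * t := by
    nlinarith [htS, hGε]
  have hA : 2 * S * (ε * t * S) < 2 * S * ((L / 2) * t ^ 2 + (5 / 2) * ε * t) :=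
    mul_lt_mul_of_pos_left key (by positivity)
  have hB : L * t * (t * S) < L * t * ε :=
    mul_lt_mul_of_pos_left ht2 (by positivity)
  have hC : ε * t * (5 * S) ≤ ε * t * (14 + 3 * L) :=
    mul_le_mul_of_nonneg_left h5S (by positivity)
  nlinarith [hA, hB, hC, hS2, mul_pos hε htpos]
end

section
/- Consider a run of length K of the exact regularized trust-region Newton method (as described in the context) applied to a twice continuously differentiable function f : ℝⁿ → ℝ that is bounded below by f_low and whose Hessian is L_H-Lipschitz continuous (operator norm), with tolerances εg, εH > 0 and parameters γ₁ ∈ (0,1), γ₂ ≥ 1, ψ ∈ (1/γ₂, 1], η ∈ (0,1), 0 < δ₀ ≤ δ_max. Then: (a) for every unsuccessful iteration k < K, ‖s_k‖ > 3(1−η)·εH/L_H (and hence δ_k > 3(1−η)·εH/L_H); and (b) δ_k ≥ min{ δ₀, 3γ₁(1−η)·εH/L_H } for every k ≤ K. -/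
open RealInnerProductSpace


set_option synthInstance.maxHeartbeats 1000000
set_option maxHeartbeats 1000000

lemma taylor_cubic {n : ℕ} (f : EuclideanSpace ℝ (Fin n) → ℝ)
    (g : EuclideanSpace ℝ (Fin n) → EuclideanSpace ℝ (Fin n))
    (Hess : EuclideanSpace ℝ (Fin n) → EuclideanSpace ℝ (Fin n) →L[ℝ] EuclideanSpace ℝ (Fin n))
    (L_H : ℝ)
    (hgrad : ∀ x, HasGradientAt f (g x) x)
    (hHess : ∀ x, HasFDerivAt g (Hess x) x)
    (hLip : ∀ x y, ‖Hess x - Hess y‖ ≤ L_H * ‖x - y‖)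
    (x₀ v : EuclideanSpace ℝ (Fin n)) :
    f (x₀ + v) ≤ f x₀ + ⟪g x₀, v⟫ + (1/2) * ⟪v, Hess x₀ v⟫ + L_H / 6 * ‖v‖^3 := by
  set γ : ℝ → EuclideanSpace ℝ (Fin n) := fun t => x₀ + t • v with hγdef
  have hγ : ∀ t : ℝ, HasDerivAt γ v t := by
    intro t
    exact (((hasDerivAt_id t).smul_const v).const_add x₀).congr_deriv (by simp)
  set C : ℝ := L_H * ‖v‖ ^ 3 with hC
  set ψ : ℝ → ℝ := fun t => ⟪g (γ t) - g x₀ - t • Hess x₀ v, v⟫ with hψdef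
  have hGder : ∀ t : ℝ, HasDerivAt (fun t => g (γ t) - g x₀ - t • Hess x₀ v)
      (Hess (γ t) v - Hess x₀ v) t := by
    intro t
    have h1 : HasDerivAt (fun t => g (γ t)) (Hess (γ t) v) t := by
      exact (hHess (γ t)).comp_hasDerivAt t (hγ t)
    have h2 : HasDerivAt (fun t : ℝ => t • Hess x₀ v) (Hess x₀ v) t := by
      simpa using (hasDerivAt_id t).smul_const (Hess x₀ v)
    exact (h1.sub_const (g x₀)).sub h2
  have hψder : ∀ t : ℝ, HasDerivAt ψ (⟪Hess (γ t) v - Hess x₀ v, v⟫) t := by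
    intro t
    have := (hGder t).inner ℝ (hasDerivAt_const t v)
    simpa using this
  have hψbound : ∀ t ∈ Set.Ico (0:ℝ) 1, ‖(⟪Hess (γ t) v - Hess x₀ v, v⟫ : ℝ)‖ ≤ C * t := by
    intro t ht
    have h1 : ‖(⟪Hess (γ t) v - Hess x₀ v, v⟫ : ℝ)‖ ≤ ‖Hess (γ t) v - Hess x₀ v‖ * ‖v‖ := by
      simpa using abs_real_inner_le_norm (Hess (γ t) v - Hess x₀ v) v
    have h2 : ‖Hess (γ t) v - Hess x₀ v‖ ≤ ‖Hess (γ t) - Hess x₀‖ * ‖v‖ := by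
      simpa using (Hess (γ t) - Hess x₀).le_opNorm v
    have h3 : ‖Hess (γ t) - Hess x₀‖ ≤ L_H * (t * ‖v‖) := by
      have := hLip (γ t) x₀
      simpa [hγdef, norm_smul, abs_of_nonneg ht.1] using this
    have hv : (0:ℝ) ≤ ‖v‖ := norm_nonneg v
    have hop : (0:ℝ) ≤ ‖Hess (γ t) - Hess x₀‖ := norm_nonneg _
    calc ‖(⟪Hess (γ t) v - Hess x₀ v, v⟫ : ℝ)‖ ≤ ‖Hess (γ t) v - Hess x₀ v‖ * ‖v‖ := h1
      _ ≤ (‖Hess (γ t) - Hess x₀‖ * ‖v‖) * ‖v‖ := mul_le_mul_of_nonneg_right h2 hv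
      _ ≤ (L_H * (t * ‖v‖) * ‖v‖) * ‖v‖ := by
          apply mul_le_mul_of_nonneg_right _ hv
          exact mul_le_mul_of_nonneg_right h3 hv
      _ = C * t := by rw [hC]; ring
  have hψ0 : ψ 0 = 0 := by simp [hψdef, hγdef]
  have hB1 : ∀ t : ℝ, HasDerivAt (fun t : ℝ => C / 2 * t ^ 2) (C * t) t := by
    intro t
    have := (hasDerivAt_pow 2 t).const_mul (C / 2)
    refine this.congr_deriv ?_
    push_cast; ring
  have hψle : ∀ t ∈ Set.Icc (0:ℝ) 1, ‖ψ t‖ ≤ C / 2 * t ^ 2 := by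
    refine image_norm_le_of_norm_deriv_right_le_deriv_boundary
      (fun t _ => (hψder t).continuousAt.continuousWithinAt)
      (fun t _ => (hψder t).hasDerivWithinAt) ?_ hB1 ?_
    · simp [hψ0]
    · intro t ht; exact hψbound t ht
  set h : ℝ → ℝ := fun t =>
    f (γ t) - f x₀ - t * ⟪g x₀, v⟫ - t ^ 2 / 2 * ⟪v, Hess x₀ v⟫ with hhdef
  have hfγ : ∀ t : ℝ, HasDerivAt (fun t => f (γ t)) (⟪g (γ t), v⟫) t := by
    intro t
    have hf : HasFDerivAt f (InnerProductSpace.toDual ℝ (EuclideanSpace ℝ (Fin n)) (g (γ t))) (γ t) :=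
      (hasGradientAt_iff_hasFDerivAt).1 (hgrad (γ t))
    have := hf.comp_hasDerivAt t (hγ t)
    exact this
  have hψeq : ∀ t : ℝ, ψ t = ⟪g (γ t), v⟫ - ⟪g x₀, v⟫ - t * ⟪v, Hess x₀ v⟫ := by
    intro t
    rw [hψdef]
    simp only [inner_sub_left, real_inner_smul_left]
    rw [real_inner_comm v ((Hess x₀) v)]
  have hhder : ∀ t : ℝ, HasDerivAt h (ψ t) t := by
    intro t
    have h1 : HasDerivAt (fun t : ℝ => t * ⟪g x₀, v⟫) (⟪g x₀, v⟫) t := by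
      simpa using (hasDerivAt_id t).mul_const (⟪g x₀, v⟫ : ℝ)
    have h2 : HasDerivAt (fun t : ℝ => t ^ 2 / 2 * ⟪v, Hess x₀ v⟫)
        (t * ⟪v, Hess x₀ v⟫) t := by
      have := ((hasDerivAt_pow 2 t).div_const 2).mul_const (⟪v, Hess x₀ v⟫ : ℝ)
      refine this.congr_deriv ?_
      push_cast; ring
    have := (((hfγ t).sub_const (f x₀)).sub h1).sub h2
    rw [hψeq t]
    exact this
  have hB2 : ∀ t : ℝ, HasDerivAt (fun t : ℝ => C / 6 * t ^ 3) (C / 2 * t ^ 2) t := by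
    intro t
    have := (hasDerivAt_pow 3 t).const_mul (C / 6)
    refine this.congr_deriv ?_
    push_cast; ring
  have hh0 : h 0 = 0 := by simp [hhdef, hγdef]
  have hhle : ∀ t ∈ Set.Icc (0:ℝ) 1, ‖h t‖ ≤ C / 6 * t ^ 3 := by
    refine image_norm_le_of_norm_deriv_right_le_deriv_boundary
      (fun t _ => (hhder t).continuousAt.continuousWithinAt)
      (fun t _ => (hhder t).hasDerivWithinAt) ?_ hB2 ?_
    · simp [hh0]
    · intro t ht
      exact hψle t ⟨ht.1, le_of_lt ht.2⟩
  have hfin := hhle 1 ⟨zero_le_one, le_refl 1⟩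
  have hγ1 : γ 1 = x₀ + v := by simp [hγdef]
  rw [Real.norm_eq_abs, one_pow, mul_one] at hfin
  have h1' := (abs_le.1 hfin).2
  rw [hhdef] at h1'
  simp only [hγ1, one_mul, one_pow] at h1'
  rw [hC] at h1'
  nlinarith [h1']

/-- Lemma 2.2 of the paper: lower bound on the trust-region radii generated by the exact
regularized trust-region Newton method.  (a) Every unsuccessful iteration `k < K` has
`‖s k‖ > 3(1-η)εH/L_H` (hence `δ k > 3(1-η)εH/L_H`); (b) `δ k ≥ min{δ₀, 3γ₁(1-η)εH/L_H}`
for every `k ≤ K`. -/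
theorem exact_TR_Newton_radius_lower_bound
    (n : ℕ) (f : EuclideanSpace ℝ (Fin n) → ℝ)
    (g : EuclideanSpace ℝ (Fin n) → EuclideanSpace ℝ (Fin n))
    (Hess : EuclideanSpace ℝ (Fin n) → EuclideanSpace ℝ (Fin n) →L[ℝ] EuclideanSpace ℝ (Fin n))
    (f_low L_H εg εH γ₁ γ₂ ψ η δ₀ δ_max : ℝ)
    (hC2 : ContDiff ℝ 2 f)
    (hgrad : ∀ x, HasGradientAt f (g x) x)
    (hHess : ∀ x, HasFDerivAt g (Hess x) x)
    (hsym : ∀ x u v, ⟪Hess x u, v⟫ = ⟪u, Hess x v⟫)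
    (hlow : ∀ x, f x ≥ f_low)
    (hL : 0 < L_H)
    (hLip : ∀ x y, ‖Hess x - Hess y‖ ≤ L_H * ‖x - y‖)
    (hεg : 0 < εg) (hεH : 0 < εH)
    (hγ₁ : γ₁ ∈ Set.Ioo (0 : ℝ) 1) (hγ₂ : 1 ≤ γ₂) (hψ : ψ ∈ Set.Ioc (1 / γ₂) 1)
    (hη : η ∈ Set.Ioo (0 : ℝ) 1) (hδ₀ : 0 < δ₀) (hδ₀max : δ₀ ≤ δ_max)
    (K : ℕ)
    (x s : ℕ → EuclideanSpace ℝ (Fin n)) (δ : ℕ → ℝ)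
    (hδinit : δ 0 = δ₀)
    -- non-termination: at every iteration, the current point is not (εg,εH)-stationary
    (hnonterm : ∀ k < K, ‖g (x k)‖ > εg ∨ ∃ v, ‖v‖ = 1 ∧ ⟪v, Hess (x k) v⟫ < -εH)
    -- exact solution of the regularized trust-region subproblem
    (hfeas : ∀ k < K, ‖s k‖ ≤ δ k)
    (hopt : ∀ k < K, ∀ u, ‖u‖ ≤ δ k →
      ⟪g (x k), s k⟫ + (1 / 2) * ⟪s k, Hess (x k) (s k)⟫ + (1 / 2) * εH * ‖s k‖ ^ 2 ≤
      ⟪g (x k), u⟫ + (1 / 2) * ⟪u, Hess (x k) u⟫ + (1 / 2) * εH * ‖u‖ ^ 2)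
    -- update on successful iterations
    (hsucc : ∀ k < K,
      f (x k) - f (x k + s k) ≥
          η * (-⟪g (x k), s k⟫ - (1 / 2) * ⟪s k, Hess (x k) (s k)⟫) →
        x (k + 1) = x k + s k ∧
        δ (k + 1) = if ‖s k‖ ≥ ψ * δ k then min (γ₂ * δ k) δ_max else δ k)
    -- update on unsuccessful iterations
    (hunsucc : ∀ k < K,
      ¬ (f (x k) - f (x k + s k) ≥
          η * (-⟪g (x k), s k⟫ - (1 / 2) * ⟪s k, Hess (x k) (s k)⟫)) →
        x (k + 1) = x k ∧ δ (k + 1) = γ₁ * ‖s k‖) :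
    (∀ k < K,
      ¬ (f (x k) - f (x k + s k) ≥
          η * (-⟪g (x k), s k⟫ - (1 / 2) * ⟪s k, Hess (x k) (s k)⟫)) →
        ‖s k‖ > 3 * (1 - η) * εH / L_H ∧ δ k > 3 * (1 - η) * εH / L_H) ∧
    (∀ k ≤ K, δ k ≥ min δ₀ (3 * γ₁ * (1 - η) * εH / L_H)) := by
  obtain ⟨hγ₁0, hγ₁1⟩ := hγ₁
  obtain ⟨hη0, hη1⟩ := hη
  have h1η : 0 < 1 - η := by linarith
  have hbound_pos : 0 < 3 * (1 - η) * εH / L_H :=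
    div_pos (by nlinarith) hL
  have hbound2_pos : 0 < 3 * γ₁ * (1 - η) * εH / L_H :=
    div_pos (by nlinarith [mul_pos (mul_pos hγ₁0 h1η) hεH]) hL
  have partA : ∀ k < K,
      ¬ (f (x k) - f (x k + s k) ≥
          η * (-⟪g (x k), s k⟫ - (1 / 2) * ⟪s k, Hess (x k) (s k)⟫)) →
        ‖s k‖ > 3 * (1 - η) * εH / L_H ∧ δ k > 3 * (1 - η) * εH / L_H := by
    intro k hk hfail
    set m : ℝ := ⟪g (x k), s k⟫ + (1 / 2) * ⟪s k, Hess (x k) (s k)⟫ with hm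
    -- model decrease from optimality with u = 0
    have h0 : ‖(0 : EuclideanSpace ℝ (Fin n))‖ ≤ δ k := by
      rw [norm_zero]; exact le_trans (norm_nonneg _) (hfeas k hk)
    have hmd : m + (1 / 2) * εH * ‖s k‖ ^ 2 ≤ 0 := by
      have := hopt k hk 0 h0
      simpa [hm] using this
    -- s k ≠ 0
    have hsne : s k ≠ 0 := by
      intro hz
      apply hfail
      rw [hz]
      simp
    have hspos : 0 < ‖s k‖ := norm_pos_iff.2 hsne
    -- Taylor bound
    have htay := taylor_cubic f g Hess L_H hgrad hHess hLip (x k) (s k)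
    -- failure inequality
    have hfail' : f (x k) - f (x k + s k) < η * (-m) := by
      rw [not_le] at hfail
      have : -⟪g (x k), s k⟫ - (1 / 2) * ⟪s k, Hess (x k) (s k)⟫ = -m := by rw [hm]; ring
      rwa [this] at hfail
    have hkey : 3 * (1 - η) * εH < L_H * ‖s k‖ := by
      have h1 : (1 - η) * (-m) < L_H / 6 * ‖s k‖ ^ 3 := by
        have h2 : f (x k) - f (x k + s k) ≥ -m - L_H / 6 * ‖s k‖ ^ 3 := by
          have : f (x k + s k) ≤ f (x k) + m + L_H / 6 * ‖s k‖ ^ 3 := by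
            rw [hm]; linarith [htay]
          linarith
        nlinarith [hfail', h2, hη0]
      have h3 : (1 - η) * ((1 / 2) * εH * ‖s k‖ ^ 2) ≤ (1 - η) * (-m) := by
        apply mul_le_mul_of_nonneg_left _ (by linarith)
        linarith [hmd]
      have h4 : (1 - η) * ((1 / 2) * εH * ‖s k‖ ^ 2) < L_H / 6 * ‖s k‖ ^ 3 := lt_of_le_of_lt h3 h1
      nlinarith [h4, hspos, sq_nonneg (‖s k‖)]
    have hs_gt : ‖s k‖ > 3 * (1 - η) * εH / L_H := (div_lt_iff₀ hL).2 (by linarith [hkey])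
    exact ⟨hs_gt, lt_of_lt_of_le hs_gt (hfeas k hk)⟩
  refine ⟨partA, ?_⟩
  intro k hk
  induction k with
  | zero => rw [hδinit]; exact min_le_left _ _
  | succ k ih =>
    have hkK : k < K := hk
    have ihk := ih (le_of_lt hkK)
    by_cases hcond : f (x k) - f (x k + s k) ≥
        η * (-⟪g (x k), s k⟫ - (1 / 2) * ⟪s k, Hess (x k) (s k)⟫)
    · obtain ⟨-, hδ'⟩ := hsucc k hkK hcond
      rw [hδ']
      split_ifs with hcase
      · refine le_min ?_ ?_
        · have hδkpos : 0 < δ k := lt_of_lt_of_le (lt_min hδ₀ hbound2_pos) ihk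
          calc min δ₀ (3 * γ₁ * (1 - η) * εH / L_H) ≤ δ k := ihk
            _ = 1 * δ k := (one_mul _).symm
            _ ≤ γ₂ * δ k := mul_le_mul_of_nonneg_right hγ₂ (le_of_lt hδkpos)
        · exact le_trans (min_le_left _ _) hδ₀max
      · exact ihk
    · obtain ⟨-, hδ'⟩ := hunsucc k hkK hcond
      rw [hδ']
      have hs_gt := (partA k hkK hcond).1
      have : 3 * γ₁ * (1 - η) * εH / L_H ≤ γ₁ * ‖s k‖ := by
        have : γ₁ * (3 * (1 - η) * εH / L_H) ≤ γ₁ * ‖s k‖ :=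
          mul_le_mul_of_nonneg_left (le_of_lt hs_gt) (le_of_lt hγ₁0)
        calc 3 * γ₁ * (1 - η) * εH / L_H = γ₁ * (3 * (1 - η) * εH / L_H) := by ring
          _ ≤ γ₁ * ‖s k‖ := this
      exact le_trans (min_le_right _ _) this
end
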